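/- Let μ > 0 and λ ∈ [−1,0), and set b(t) := μ(1+t)^{−λ}, so b′(t) = −λμ(1+t)^{−λ−1} ≥ 0. For a fixed r ≥ 0 define m_u(t) := r² − b(t)²/4 + b′(t)/2 and, where m_u(t) < 0, h(t) := √( b(t)²/4 − b′(t)/2 − r² ) = √(|m_u(t)|). Then for every ε ∈ (0,1/2) there exist constants C3 > 0, C4 > 0, C > 0 and T ≥ 0, depending only on μ, λ and ε, such that for all t ≥ T and all r ≥ 0 with h(t) ≥ ε·b(t) (the elliptic-zone condition), the two-sided estimate holds: −C4·r²/b(t) − C·(1+t)^{λ−2} ≤ h(t) + h′(t)/(2h(t)) − b(t)/2 ≤ −C3·r²/b(t) + C·(1+t)^{λ−2}, where h′(t) denotes the derivative of h at t (with r held fixed). -/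

import Mathlib

set_option maxHeartbeats 4000000

lemma aux_elliptic_u (ε l μ s b b1 b2 q r H : ℝ)
    (hε0 : 0 < ε) (hε2 : ε < 1/2)
    (hl0 : 0 < l) (hl1 : l ≤ 1)
    (hμ : 0 < μ) (hs1 : 1 ≤ s)
    (hb0 : 0 < b) (hμb : μ ≤ b)
    (hr : 0 ≤ r)
    (hb1 : b1 * s = l * b)
    (hb2 : b2 * s ^ 2 = l * (l - 1) * b)
    (hsize : 4 ≤ ε ^ 2 * μ * s)
    (hq : q * (b * s ^ 2) = μ)
    (hHsq : H ^ 2 = b ^ 2 / 4 - b1 / 2 - r ^ 2)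
    (hεH : ε * b ≤ H) :
    (-2 * r ^ 2 / b - (2 / (ε ^ 2 * μ) + 1) * q
        ≤ H + (b * b1 - b2) / 2 / (2 * H) / (2 * H) - b / 2) ∧
    (H + (b * b1 - b2) / 2 / (2 * H) / (2 * H) - b / 2
        ≤ -(1/2) * r ^ 2 / b + (2 / (ε ^ 2 * μ) + 1) * q) := by
  have hs0 : (0:ℝ) < s := lt_of_lt_of_le one_pos hs1
  have hH0 : 0 < H := lt_of_lt_of_le (by positivity) hεH
  have hP0 : 0 < H + b / 2 := by linarith
  have hb1nn : 0 ≤ b1 := by nlinarith [mul_pos hl0 hb0]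
  have hb2np : b2 ≤ 0 := by nlinarith [mul_pos hl0 hb0, mul_pos hs0 hs0]
  have hq0 : 0 < q := by nlinarith [mul_pos hb0 (mul_pos hs0 hs0)]
  have hHb : H ≤ b / 2 := by nlinarith [hHsq, hb1nn, sq_nonneg r, hP0, hH0]
  have hA1 : (b / 2 - H) * (H + b / 2) = b1 / 2 + r ^ 2 := by linear_combination -hHsq
  -- ===== stage 3 : polynomial facts (small context) =====
  have Pr2 : r ^ 2 * b ≤ 2 * r ^ 2 * (H + b / 2) := by
    linarith [mul_nonneg (sq_nonneg r) hH0.le]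
  have Pub1 : r ^ 2 * (H + b / 2) ≤ r ^ 2 * b := by
    linarith [mul_nonneg (sq_nonneg r) (show (0:ℝ) ≤ b / 2 - H by linarith)]
  have h2a : ε ^ 2 * b ^ 2 ≤ H ^ 2 := by
    have := mul_le_mul hεH hεH (by positivity) hH0.le
    nlinarith [this]
  have h2b : b ^ 2 / 4 ≤ (H + b / 2) ^ 2 := by
    nlinarith [mul_pos hH0 hb0, sq_nonneg H]
  have h2c : ε ^ 2 * b ^ 2 * (b ^ 2 / 4) ≤ H ^ 2 * (H + b / 2) ^ 2 :=
    mul_le_mul h2a h2b (by positivity) (sq_nonneg H)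
  have h2 : (H + b / 4) * (ε ^ 2 * b ^ 3) ≤ 4 * (H ^ 2 * (H + b / 2) ^ 2) := by
    linarith [h2c, mul_le_mul_of_nonneg_right (show H + b / 4 ≤ b by linarith)
      (show (0:ℝ) ≤ ε ^ 2 * b ^ 3 by positivity)]
  have h1 : 0 ≤ b1 * (b / 2 - H) := mul_nonneg hb1nn (by linarith)
  have Pgub : b1 * (b / 2 - H) * (H + b / 4) * (ε ^ 2 * b ^ 3)
      ≤ (b1 ^ 2 + 2 * b1 * r ^ 2) * (2 * H ^ 2 * (H + b / 2)) := by
    calc b1 * (b / 2 - H) * (H + b / 4) * (ε ^ 2 * b ^ 3)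
        ≤ b1 * (b / 2 - H) * (4 * (H ^ 2 * (H + b / 2) ^ 2)) := by
          linarith [mul_le_mul_of_nonneg_left h2 h1]
      _ = (b1 ^ 2 + 2 * b1 * r ^ 2) * (2 * H ^ 2 * (H + b / 2)) := by
          linear_combination (4 * b1 * H ^ 2 * (H + b / 2)) * hA1
  have eb1sq : b1 ^ 2 * s ^ 2 = l ^ 2 * b ^ 2 := by
    linear_combination (b1 * s + l * b) * hb1
  have Ppart1 : b1 ^ 2 * (ε ^ 2 * μ) ≤ q * (ε ^ 2 * b ^ 3) := by
    have key : q * (ε ^ 2 * b ^ 3) * s ^ 2 - b1 ^ 2 * (ε ^ 2 * μ) * s ^ 2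
        = ε ^ 2 * q * b ^ 3 * s ^ 2 * (1 - l ^ 2) := by
      linear_combination (ε ^ 2 * s ^ 2 * b1 ^ 2) * hq + (-(ε ^ 2 * q * b * s ^ 2)) * eb1sq
    have hfac : 0 ≤ ε ^ 2 * q * b ^ 3 * s ^ 2 * (1 - l ^ 2) :=
      mul_nonneg (by positivity) (by nlinarith)
    have k4 : b1 ^ 2 * (ε ^ 2 * μ) * s ^ 2 ≤ q * (ε ^ 2 * b ^ 3) * s ^ 2 := by linarith
    exact le_of_mul_le_mul_right k4 (pow_pos hs0 2)
  have h4 : 4 * b1 * s ≤ ε ^ 2 * b ^ 2 * s := by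
    linarith [hb1, mul_le_mul_of_nonneg_right hl1 hb0.le,
      mul_le_mul_of_nonneg_right hsize hb0.le,
      mul_le_mul_of_nonneg_right hμb (show (0:ℝ) ≤ ε ^ 2 * b * s by positivity)]
  have h4' : 4 * b1 ≤ ε ^ 2 * b ^ 2 := le_of_mul_le_mul_right h4 hs0
  have Ppart2 : 2 * b1 * r ^ 2 * (2 * b) ≤ r ^ 2 * (ε ^ 2 * b ^ 3) := by
    linarith [mul_le_mul_of_nonneg_right h4' (mul_nonneg (sq_nonneg r) hb0.le)]
  have PNub : (-b2) * (ε ^ 2 * μ) ≤ q * (8 * H ^ 2) := by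
    have k1 : (-b2) * (ε ^ 2 * μ) * s ^ 2 = ε ^ 2 * q * b ^ 2 * s ^ 2 * (l * (1 - l)) := by
      linear_combination (-(ε ^ 2 * μ)) * hb2 + (-(l * (1 - l) * ε ^ 2 * b)) * hq
    have k2 : ε ^ 2 * q * b ^ 2 * s ^ 2 * (l * (1 - l))
        ≤ ε ^ 2 * q * b ^ 2 * s ^ 2 * (1 / 4) :=
      mul_le_mul_of_nonneg_left (by linarith [sq_nonneg (2 * l - 1)]) (by positivity)
    have k3 : ε ^ 2 * q * b ^ 2 * s ^ 2 * (1 / 4) ≤ q * (8 * H ^ 2) * s ^ 2 := by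
      linarith [mul_le_mul_of_nonneg_left h2a (show (0:ℝ) ≤ 8 * q * s ^ 2 by positivity),
        mul_nonneg (mul_nonneg hq0.le (sq_nonneg s)) (sq_nonneg H)]
    have k4 : (-b2) * (ε ^ 2 * μ) * s ^ 2 ≤ q * (8 * H ^ 2) * s ^ 2 := by linarith
    exact le_of_mul_le_mul_right k4 (pow_pos hs0 2)
  -- ===== stage 4 : division-level facts =====
  have e0 : H + (b * b1 - b2) / 2 / (2 * H) / (2 * H) - b / 2
      = (H - b / 2) + (b * b1) / (8 * H ^ 2) + (-b2) / (8 * H ^ 2) := by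
    field_simp
    ring
  have e1 : (H - b / 2) * (H + b / 2) = -(b1 / 2 + r ^ 2) := by linear_combination -hA1
  have e1' : H - b / 2 = (-(b1 / 2 + r ^ 2)) / (H + b / 2) :=
    (eq_div_iff hP0.ne').mpr e1
  have e2 : (-(b1 / 2 + r ^ 2)) / (H + b / 2)
      = -(r ^ 2 / (H + b / 2)) - b1 / (2 * (H + b / 2)) := by
    field_simp
    ring
  have e3 : -(b1 / (2 * (H + b / 2))) + (b * b1) / (8 * H ^ 2)
      = b1 * (b / 2 - H) * (H + b / 4) / (2 * H ^ 2 * (H + b / 2)) := by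
    field_simp
    ring
  have hM : H + (b * b1 - b2) / 2 / (2 * H) / (2 * H) - b / 2
      = -(r ^ 2 / (H + b / 2))
        + b1 * (b / 2 - H) * (H + b / 4) / (2 * H ^ 2 * (H + b / 2))
        + (-b2) / (8 * H ^ 2) := by
    rw [e0, e1', e2]
    linarith [e3]
  have hGnn : 0 ≤ b1 * (b / 2 - H) * (H + b / 4) / (2 * H ^ 2 * (H + b / 2)) :=
    div_nonneg (mul_nonneg (mul_nonneg hb1nn (by linarith)) (by linarith)) (by positivity)
  have hNnn : 0 ≤ (-b2) / (8 * H ^ 2) :=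
    div_nonneg (by linarith) (by positivity)
  have hr2 : r ^ 2 / (H + b / 2) ≤ 2 * r ^ 2 / b := by
    rw [div_le_div_iff₀ hP0 hb0]; linarith [Pr2]
  have hCq : 0 ≤ (2 / (ε ^ 2 * μ) + 1) * q := by positivity
  have hub1 : -(r ^ 2 / (H + b / 2)) ≤ -(r ^ 2 / b) := by
    have : r ^ 2 / b ≤ r ^ 2 / (H + b / 2) := by
      rw [div_le_div_iff₀ hb0 hP0]; linarith [Pub1]
    linarith
  have hGub : b1 * (b / 2 - H) * (H + b / 4) / (2 * H ^ 2 * (H + b / 2))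
      ≤ (b1 ^ 2 + 2 * b1 * r ^ 2) / (ε ^ 2 * b ^ 3) := by
    rw [div_le_div_iff₀ (by positivity) (by positivity)]; linarith [Pgub]
  have part1 : b1 ^ 2 / (ε ^ 2 * b ^ 3) ≤ q / (ε ^ 2 * μ) := by
    rw [div_le_div_iff₀ (by positivity) (by positivity)]; linarith [Ppart1]
  have part2 : 2 * b1 * r ^ 2 / (ε ^ 2 * b ^ 3) ≤ r ^ 2 / (2 * b) := by
    rw [div_le_div_iff₀ (by positivity) (by positivity)]; linarith [Ppart2]
  have hNub : (-b2) / (8 * H ^ 2) ≤ q / (ε ^ 2 * μ) := by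
    rw [div_le_div_iff₀ (by positivity) (by positivity)]; linarith [PNub]
  have hsum : (b1 ^ 2 + 2 * b1 * r ^ 2) / (ε ^ 2 * b ^ 3)
      = b1 ^ 2 / (ε ^ 2 * b ^ 3) + 2 * b1 * r ^ 2 / (ε ^ 2 * b ^ 3) := by ring
  have hq2 : q / (ε ^ 2 * μ) + q / (ε ^ 2 * μ) = (2 / (ε ^ 2 * μ)) * q := by ring
  have hq3 : (2 / (ε ^ 2 * μ)) * q ≤ (2 / (ε ^ 2 * μ) + 1) * q := by
    have : (2 / (ε ^ 2 * μ) + 1) * q - (2 / (ε ^ 2 * μ)) * q = q := by ring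
    linarith [hq0.le]
  constructor
  · rw [hM]
    have hgl : -2 * r ^ 2 / b = -(2 * r ^ 2 / b) := by ring
    rw [hgl]
    linarith [hGnn, hNnn, hr2, hCq]
  · rw [hM]
    have hh1 : r ^ 2 / (2 * b) = (1/2) * (r ^ 2 / b) := by ring
    have hh2 : -(r ^ 2 / b) + (1/2) * (r ^ 2 / b) = -(1/2) * r ^ 2 / b := by ring
    linarith [hub1, hGub, part1, part2, hNub, hsum, hq2, hq3, hh1, hh2]

/-- Elliptic-zone asymptotic estimate for the `u`-equation: with
`b(t) = μ(1+t)^(−λ)`, `b′(t) = −λμ(1+t)^(−λ−1)` and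
`h(t) = √(b(t)²/4 − b′(t)/2 − r²)`, the quantity `h + h′/(2h) − b/2` is
comparable to `−r²/b(t)` up to an error `O((1+t)^(λ−2))` (no `b′/b` term). -/
theorem elliptic_zone_estimate_u
    (μ lam ε : ℝ) (hμ : 0 < μ) (hlam : lam ∈ Set.Ico (-1:ℝ) 0)
    (hε : ε ∈ Set.Ioo (0:ℝ) (1/2:ℝ)) :
    ∃ C3 > (0:ℝ), ∃ C4 > (0:ℝ), ∃ C > (0:ℝ), ∃ T ≥ (0:ℝ),
      ∀ t : ℝ, T ≤ t → ∀ r : ℝ, 0 ≤ r →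
        ∀ h : ℝ → ℝ,
          (h = fun τ =>
            Real.sqrt ((μ * (1+τ)^(-lam))^2/4 - (-lam * μ * (1+τ)^(-lam-1))/2 - r^2)) →
          ε * (μ * (1+t)^(-lam)) ≤ h t →
          (-C4 * r^2 / (μ * (1+t)^(-lam)) - C * (1+t)^(lam-2)
            ≤ h t + deriv h t / (2 * h t) - (μ * (1+t)^(-lam)) / 2) ∧
          (h t + deriv h t / (2 * h t) - (μ * (1+t)^(-lam)) / 2
            ≤ -C3 * r^2 / (μ * (1+t)^(-lam)) + C * (1+t)^(lam-2)) := by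
  obtain ⟨hlam1, hlam0⟩ := hlam
  obtain ⟨hε0, hε2⟩ := hε
  have hεμ : (0:ℝ) < ε ^ 2 * μ := by positivity
  refine ⟨1/2, by norm_num, 2, by norm_num, 2 / (ε ^ 2 * μ) + 1, by positivity,
    4 / (ε ^ 2 * μ), by positivity, ?_⟩
  intro t ht r hr h hh hεH
  subst hh
  simp only at hεH ⊢
  have hs1 : (1:ℝ) ≤ 1 + t := by
    have : (0:ℝ) ≤ 4 / (ε ^ 2 * μ) := by positivity
    linarith
  have hs0 : (0:ℝ) < 1 + t := by linarith
  have hsne : (1:ℝ) + t ≠ 0 := hs0.ne'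
  have hb0 : (0:ℝ) < μ * (1 + t) ^ (-lam) := by positivity
  have hH0 : (0:ℝ) <
      Real.sqrt ((μ * (1+t)^(-lam))^2/4 - (-lam * μ * (1+t)^(-lam-1))/2 - r^2) :=
    lt_of_lt_of_le (by positivity) hεH
  have hFt0 : (0:ℝ) < (μ * (1+t)^(-lam))^2/4 - (-lam * μ * (1+t)^(-lam-1))/2 - r^2 :=
    Real.sqrt_pos.mp hH0
  -- derivative of the inner function
  have hder1 : HasDerivAt (fun τ : ℝ => 1 + τ) 1 t := by
    simpa using (hasDerivAt_id t).const_add (1:ℝ)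
  have hpow1 : HasDerivAt (fun τ : ℝ => (1+τ)^(-lam)) (-lam * (1+t)^(-lam-1)) t := by
    have := hder1.rpow_const (p := -lam) (Or.inl hsne)
    convert this using 1
    ring
  have hpow2 : HasDerivAt (fun τ : ℝ => (1+τ)^(-lam-1)) ((-lam-1) * (1+t)^(-lam-2)) t := by
    have := hder1.rpow_const (p := -lam-1) (Or.inl hsne)
    convert this using 1
    rw [show -lam - 1 - 1 = -lam - 2 by ring]
    ring
  have hF : HasDerivAt
      (fun τ : ℝ => (μ * (1+τ)^(-lam))^2/4 - (-lam * μ * (1+τ)^(-lam-1))/2 - r^2)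
      (((μ * (1+t)^(-lam)) * (-lam * μ * (1+t)^(-lam-1))
        - (-lam * μ * ((-lam-1) * (1+t)^(-lam-2)))) / 2) t := by
    have h1 := ((hpow1.const_mul μ).pow 2).div_const 4
    have h2 := (hpow2.const_mul (-lam * μ)).div_const 2
    have h3 := (h1.sub h2).sub_const (r^2)
    refine h3.congr_deriv ?_
    push_cast
    ring
  have hd := hF.sqrt hFt0.ne'
  have hdval : deriv
      (fun τ : ℝ => Real.sqrt ((μ * (1+τ)^(-lam))^2/4 - (-lam * μ * (1+τ)^(-lam-1))/2 - r^2)) t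
      = ((μ * (1+t)^(-lam)) * (-lam * μ * (1+t)^(-lam-1))
          - (-lam * μ * ((-lam-1) * (1+t)^(-lam-2)))) / 2
        / (2 * Real.sqrt ((μ * (1+t)^(-lam))^2/4 - (-lam * μ * (1+t)^(-lam-1))/2 - r^2)) :=
    hd.deriv
  rw [hdval]
  -- algebraic relations for the auxiliary lemma
  have e1 : (1+t)^(-lam-1) * (1+t) = (1+t)^(-lam) := by
    rw [← Real.rpow_add_one hsne]
    norm_num
  have e2 : (1+t)^(-lam-2) * (1+t)^2 = (1+t)^(-lam) := by
    rw [← Real.rpow_natCast (1+t) 2, ← Real.rpow_add hs0]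
    norm_num
  have e3 : (1+t)^(lam-2) * ((1+t)^(-lam) * (1+t)^2) = 1 := by
    rw [← Real.rpow_natCast (1+t) 2, ← Real.rpow_add hs0, ← Real.rpow_add hs0]
    norm_num
  have hb1rel : (-lam * μ * (1+t)^(-lam-1)) * (1+t) = (-lam) * (μ * (1+t)^(-lam)) := by
    linear_combination (-lam * μ) * e1
  have hb2rel : (-lam * μ * ((-lam-1) * (1+t)^(-lam-2))) * (1+t)^2
      = (-lam) * ((-lam) - 1) * (μ * (1+t)^(-lam)) := by
    linear_combination (-lam * μ * (-lam-1)) * e2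
  have hqrel : (1+t)^(lam-2) * ((μ * (1+t)^(-lam)) * (1+t)^2) = μ := by
    linear_combination μ * e3
  have hμb : μ ≤ μ * (1 + t) ^ (-lam) := by
    have h0 := Real.rpow_le_rpow_of_exponent_le hs1 (show (0:ℝ) ≤ -lam by linarith)
    rw [Real.rpow_zero] at h0
    nlinarith [h0]
  have hsize : 4 ≤ ε ^ 2 * μ * (1 + t) := by
    have h1 := (div_le_iff₀ hεμ).mp ht
    nlinarith [h1, hεμ.le]
  have hHsq : (Real.sqrt ((μ * (1+t)^(-lam))^2/4 - (-lam * μ * (1+t)^(-lam-1))/2 - r^2)) ^ 2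
      = (μ * (1+t)^(-lam)) ^ 2 / 4 - (-lam * μ * (1+t)^(-lam-1)) / 2 - r ^ 2 :=
    Real.sq_sqrt hFt0.le
  obtain ⟨L, U⟩ := aux_elliptic_u ε (-lam) μ (1+t) (μ * (1+t)^(-lam))
    (-lam * μ * (1+t)^(-lam-1)) (-lam * μ * ((-lam-1) * (1+t)^(-lam-2))) ((1+t)^(lam-2)) r
    (Real.sqrt ((μ * (1+t)^(-lam))^2/4 - (-lam * μ * (1+t)^(-lam-1))/2 - r^2))
    hε0 hε2 (by linarith) (by linarith) hμ hs1 hb0 hμb hr hb1rel hb2rel hsize hqrel hHsq hεH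
  constructor
  · linarith [L]
  · linarith [U]
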